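/- Let (X, C, R, κ) be a weakly reversible mass-action system with complex matrix Y ∈ ℝ^{n×m}, Laplacian A_κ, incidence range 𝓘 = ran I, G(z) = A_κ e^z, and K = Π_𝓘(ran Y^⊤). Let P be a positive stoichiometric class and F : K → 𝓘^⊥ the unique continuous function with Y^⊤ log P = {z + F(z) : z ∈ K}. Then G(Y^⊤ log P) ∩ (ran Y^⊤)^⊥ = Ĝ(K) ∩ K^⊥, where Ĝ = G ∘ (Id + F). In particular E₊ ∩ P ≠ ∅ if and only if Ĝ(K) ∩ K^⊥ ≠ ∅. -/

import Mathlib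

open Matrix

/-- The range of `mulVec A`, viewed as a subspace of Euclidean space. -/
noncomputable def matRangeE {m : ℕ} {k : Type*} [Fintype k]
    (A : Matrix (Fin m) k ℝ) : Submodule ℝ (EuclideanSpace ℝ (Fin m)) :=
  Submodule.comap
    (WithLp.linearEquiv 2 ℝ (Fin m → ℝ) : EuclideanSpace ℝ (Fin m) →ₗ[ℝ] (Fin m → ℝ))
    (LinearMap.range A.mulVecLin)

/-- The incidence matrix of the digraph with vertex set `Fin m` and edge set `R`. -/
noncomputable def incMatrix (m : ℕ) (R : Finset (Fin m × Fin m)) :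
    Matrix (Fin m) {e // e ∈ R} ℝ :=
  fun i e => (if (e : Fin m × Fin m).2 = i then (1 : ℝ) else 0) -
    (if (e : Fin m × Fin m).1 = i then (1 : ℝ) else 0)

/-- The Laplacian `A_κ` of the labelled digraph `(C, R, κ)` on `Fin m`. -/
noncomputable def lapMatrix (m : ℕ) (R : Finset (Fin m × Fin m))
    (κ : Fin m × Fin m → ℝ) : Matrix (Fin m) (Fin m) ℝ :=
  fun a b =>
    if a = b then -(∑ k, if (a, k) ∈ R then κ (a, k) else 0)
    else if (b, a) ∈ R then κ (b, a) else 0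

lemma lap_mem_inc (m : ℕ) (R : Finset (Fin m × Fin m)) (hloop : ∀ e ∈ R, e.1 ≠ e.2)
    (κ : Fin m × Fin m → ℝ) (v : Fin m → ℝ) :
    (lapMatrix m R κ).mulVec v =
      (incMatrix m R).mulVec (fun e => κ e * v (e : Fin m × Fin m).1) := by
  funext a
  simp only [mulVec, dotProduct, lapMatrix, incMatrix]
  rw [Finset.sum_coe_sort R (fun e => (((if e.2 = a then (1:ℝ) else 0) - if e.1 = a then 1 else 0)) * (κ e * v e.1))]
  have key : ∀ e ∈ R, (((if e.2 = a then (1:ℝ) else 0) - if e.1 = a then 1 else 0)) * (κ e * v e.1)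
      = (if e.2 = a then κ e * v e.1 else 0) - (if e.1 = a then κ e * v a else 0) := by
    intro e _
    by_cases h2 : e.2 = a <;> by_cases h1 : e.1 = a <;> simp [h1, h2]
  rw [Finset.sum_congr rfl key, Finset.sum_sub_distrib]
  have hA : ∑ e ∈ R, (if e.2 = a then κ e * v e.1 else 0)
      = ∑ b, (if (b, a) ∈ R then κ (b, a) else 0) * v b := by
    have : ∀ b : Fin m, (if (b, a) ∈ R then κ (b, a) else 0) * v b
        = ∑ e ∈ R, if (b, a) = e then κ e * v e.1 else 0 := by
      intro b
      rw [Finset.sum_ite_eq R (b, a) (fun e => κ e * v e.1)]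
      by_cases h : (b, a) ∈ R <;> simp [h]
    rw [Finset.sum_congr rfl fun b _ => this b, Finset.sum_comm]
    refine Finset.sum_congr rfl fun e he => ?_
    by_cases h : e.2 = a
    · have : ∀ b : Fin m, ((b, a) = e) ↔ (b = e.1) := by
        intro b; constructor
        · rintro rfl; rfl
        · rintro rfl; rw [← h]
      simp only [this, h, if_true]
      rw [Finset.sum_ite_eq' Finset.univ e.1 (fun _ => κ e * v e.1)]
      simp
    · have : ∀ b : Fin m, ¬((b, a) = e) := by
        rintro b rfl; exact h rfl
      simp [this, h]
  have hB : ∑ e ∈ R, (if e.1 = a then κ e * v a else 0)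
      = (∑ k, if (a, k) ∈ R then κ (a, k) else 0) * v a := by
    rw [Finset.sum_mul]
    have : ∀ k : Fin m, (if (a, k) ∈ R then κ (a, k) else 0) * v a
        = ∑ e ∈ R, if (a, k) = e then κ e * v a else 0 := by
      intro k
      rw [Finset.sum_ite_eq R (a, k) (fun e => κ e * v a)]
      by_cases h : (a, k) ∈ R <;> simp [h]
    rw [Finset.sum_congr rfl fun k _ => this k, Finset.sum_comm]
    refine Finset.sum_congr rfl fun e he => ?_
    by_cases h : e.1 = a
    · have : ∀ k : Fin m, ((a, k) = e) ↔ (k = e.2) := by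
        intro k; constructor
        · rintro rfl; rfl
        · rintro rfl; rw [← h]
      simp only [this, h, if_true]
      rw [Finset.sum_ite_eq' Finset.univ e.2 (fun _ => κ e * v a)]
      simp
    · have : ∀ k : Fin m, ¬((a, k) = e) := by
        rintro k rfl; exact h rfl
      simp [this, h]
  rw [hA, hB]
  have hsplit : ∀ b : Fin m,
      (if a = b then -(∑ k, if (a, k) ∈ R then κ (a, k) else 0) else if (b, a) ∈ R then κ (b, a) else 0) * v b
      = (if (b, a) ∈ R then κ (b, a) else 0) * v b
        + (if b = a then -(∑ k, if (a, k) ∈ R then κ (a, k) else 0) * v b else 0) := by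
    intro b
    by_cases h : a = b
    · subst h
      have : (a, a) ∉ R := fun hm => hloop _ hm rfl
      simp [this]
    · simp [h, Ne.symm h]
  rw [Finset.sum_congr rfl fun b _ => hsplit b, Finset.sum_add_distrib,
    Finset.sum_ite_eq' Finset.univ a]
  simp
  ring

lemma inner_ranT {n m : ℕ} (Y : Matrix (Fin n) (Fin m) ℝ)
    (v : Fin n → ℝ) (w : EuclideanSpace ℝ (Fin m)) :
    (inner ℝ ((WithLp.linearEquiv 2 ℝ (Fin m → ℝ)).symm (Yᵀ.mulVec v)) w : ℝ)
      = v ⬝ᵥ Y.mulVec (WithLp.linearEquiv 2 ℝ (Fin m → ℝ) w) := by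
  rw [dotProduct_mulVec, ← mulVec_transpose]
  simp only [PiLp.inner_apply, RCLike.inner_apply, starRingEnd_apply, star_trivial, dotProduct]
  exact Finset.sum_congr rfl fun i _ => mul_comm _ _

lemma mem_orth_ranT_iff {n m : ℕ} (Y : Matrix (Fin n) (Fin m) ℝ)
    (w : EuclideanSpace ℝ (Fin m)) :
    w ∈ (matRangeE Yᵀ)ᗮ ↔ Y.mulVec (WithLp.linearEquiv 2 ℝ (Fin m → ℝ) w) = 0 := by
  rw [Submodule.mem_orthogonal]
  constructor
  · intro h
    funext i
    have := h ((WithLp.linearEquiv 2 ℝ (Fin m → ℝ)).symm (Yᵀ.mulVec (Pi.single i 1))) ⟨Pi.single i 1, rfl⟩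
    rw [inner_ranT] at this
    simpa using this
  · rintro h v ⟨u, hu⟩
    have hv : v = (WithLp.linearEquiv 2 ℝ (Fin m → ℝ)).symm (Yᵀ.mulVec u) := by
      apply (WithLp.linearEquiv 2 ℝ (Fin m → ℝ)).injective
      simp only [Matrix.mulVecLin_apply] at hu; exact hu.symm
    rw [hv, inner_ranT, h]
    simp

lemma mem_orth_proj_iff {E : Type*} [NormedAddCommGroup E] [InnerProductSpace ℝ E]
    (𝓘 V : Submodule ℝ E) [CompleteSpace 𝓘] (w : E) (hw : w ∈ 𝓘) :
    w ∈ Vᗮ ↔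
      w ∈ (Submodule.map (𝓘.subtype.comp 𝓘.orthogonalProjectionOnto.toLinearMap) V)ᗮ := by
  have key : ∀ v : E, (inner ℝ ((𝓘.orthogonalProjectionOnto v : E)) w : ℝ) = inner ℝ v w := by
    intro v
    have h1 : v - 𝓘.orthogonalProjectionOnto v ∈ 𝓘ᗮ :=
      Submodule.sub_starProjection_mem_orthogonal v
    have h2 : (inner ℝ w (v - (𝓘.orthogonalProjectionOnto v : E)) : ℝ) = 0 := h1 w hw
    rw [real_inner_comm] at h2
    rw [inner_sub_left] at h2
    linarith
  rw [Submodule.mem_orthogonal, Submodule.mem_orthogonal]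
  constructor
  · rintro h u ⟨v, hv, rfl⟩
    simp only [LinearMap.coe_comp, Function.comp_apply, Submodule.coe_subtype,
      ContinuousLinearMap.coe_coe]
    rw [key v]
    exact h v hv
  · intro h v hv
    have := h ((𝓘.orthogonalProjectionOnto v : E)) ⟨v, hv, rfl⟩
    rwa [key v] at this

lemma prod_rpow_eq_exp {n m : ℕ} (Y : Matrix (Fin n) (Fin m) ℝ)
    (x : Fin n → ℝ) (hx : ∀ i, 0 < x i) (j : Fin m) :
    (∏ i, x i ^ Y i j) = Real.exp (Yᵀ.mulVec (fun i => Real.log (x i)) j) := by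
  rw [mulVec, dotProduct, Real.exp_sum]
  refine Finset.prod_congr rfl fun i _ => ?_
  rw [transpose_apply, mul_comm, Real.exp_mul, Real.exp_log (hx i)]

/-- For a weakly reversible mass-action system with complex matrix `Y`, Laplacian `A_κ`,
`𝓘 = ran I`, `G(z) = A_κ e^z`, `K = Π_𝓘(ran Y^⊤)`, positive stoichiometric class `P`,
and `F : K → 𝓘^⊥` the unique continuous function with `Y^⊤ log P = {z + F(z) : z ∈ K}`:
`G(Y^⊤ log P) ∩ (ran Y^⊤)^⊥ = Ĝ(K) ∩ K^⊥` where `Ĝ = G ∘ (Id + F)`; in particular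
`E₊ ∩ P ≠ ∅` iff `Ĝ(K) ∩ K^⊥ ≠ ∅`. -/
theorem stmt_18 (n m : ℕ) (Y : Matrix (Fin n) (Fin m) ℝ)
    (R : Finset (Fin m × Fin m)) (hloop : ∀ e ∈ R, e.1 ≠ e.2)
    (hwr : ∀ i j : Fin m,
      Relation.ReflTransGen (fun a b => (a, b) ∈ R ∨ (b, a) ∈ R) i j →
      Relation.ReflTransGen (fun a b => (a, b) ∈ R) i j)
    (κ : Fin m × Fin m → ℝ) (hκ : ∀ e ∈ R, 0 < κ e)
    (p : Fin n → ℝ) (hp : ∀ i, 0 < p i)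
    (𝓘 : Submodule ℝ (EuclideanSpace ℝ (Fin m))) (h𝓘 : 𝓘 = matRangeE (incMatrix m R))
    (K : Submodule ℝ (EuclideanSpace ℝ (Fin m)))
    (hK : K = Submodule.map
      (𝓘.subtype.comp 𝓘.orthogonalProjectionOnto.toLinearMap) (matRangeE Yᵀ))
    (P : Set (Fin n → ℝ))
    (hP : P = {x | (∀ i, 0 < x i) ∧
      ∃ u : {e // e ∈ R} → ℝ, x = p + (Y * incMatrix m R).mulVec u})
    (F : K → 𝓘ᗮ) (hFcont : Continuous F)
    (hF : {w : EuclideanSpace ℝ (Fin m) | ∃ x ∈ P,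
        w = (WithLp.linearEquiv 2 ℝ (Fin m → ℝ)).symm
          (Yᵀ.mulVec (fun i => Real.log (x i)))} =
      {w : EuclideanSpace ℝ (Fin m) | ∃ z : K, w = (z : _) + (F z : _)}) :
    ({w : EuclideanSpace ℝ (Fin m) |
        (∃ x ∈ P, w = (WithLp.linearEquiv 2 ℝ (Fin m → ℝ)).symm
          ((lapMatrix m R κ).mulVec
            (fun j => Real.exp (Yᵀ.mulVec (fun i => Real.log (x i)) j)))) ∧
        w ∈ (matRangeE Yᵀ)ᗮ} =
      {w : EuclideanSpace ℝ (Fin m) |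
        (∃ z : K, w = (WithLp.linearEquiv 2 ℝ (Fin m → ℝ)).symm
          ((lapMatrix m R κ).mulVec
            (fun j => Real.exp ((z : EuclideanSpace ℝ (Fin m)) j +
              ((F z : EuclideanSpace ℝ (Fin m))) j)))) ∧
        w ∈ Kᗮ}) ∧
    ((∃ x ∈ P, Y.mulVec ((lapMatrix m R κ).mulVec (fun j => ∏ i, x i ^ Y i j)) = 0) ↔
      (∃ z : K, (WithLp.linearEquiv 2 ℝ (Fin m → ℝ)).symm
          ((lapMatrix m R κ).mulVec
            (fun j => Real.exp ((z : EuclideanSpace ℝ (Fin m)) j +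
              ((F z : EuclideanSpace ℝ (Fin m))) j))) ∈ Kᗮ)) := by
  set L := WithLp.linearEquiv 2 ℝ (Fin m → ℝ) with hL
  -- every lap image is in 𝓘
  have hIm : ∀ v : Fin m → ℝ, L.symm ((lapMatrix m R κ).mulVec v) ∈ 𝓘 := by
    intro v
    rw [h𝓘]
    refine ⟨fun e => κ e * v (e : Fin m × Fin m).1, ?_⟩
    simp only [Matrix.mulVecLin_apply]
    rw [← lap_mem_inc m R hloop κ v]
    simp
    rfl
  -- existence clause equivalence
  have hEx : ∀ w : EuclideanSpace ℝ (Fin m),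
      (∃ x ∈ P, w = L.symm ((lapMatrix m R κ).mulVec
        (fun j => Real.exp (Yᵀ.mulVec (fun i => Real.log (x i)) j)))) ↔
      (∃ z : K, w = L.symm ((lapMatrix m R κ).mulVec
        (fun j => Real.exp ((z : EuclideanSpace ℝ (Fin m)) j +
          ((F z : EuclideanSpace ℝ (Fin m))) j)))) := by
    intro w
    constructor
    · rintro ⟨x, hx, rfl⟩
      have hmem : L.symm (Yᵀ.mulVec (fun i => Real.log (x i))) ∈
          {w : EuclideanSpace ℝ (Fin m) | ∃ z : K, w = (z : _) + (F z : _)} := by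
        rw [← hF]; exact ⟨x, hx, rfl⟩
      obtain ⟨z, hz⟩ := hmem
      refine ⟨z, ?_⟩
      have hfun : (fun j => Real.exp (Yᵀ.mulVec (fun i => Real.log (x i)) j))
          = fun j => Real.exp ((z : EuclideanSpace ℝ (Fin m)) j +
              ((F z : EuclideanSpace ℝ (Fin m))) j) := by
        funext j
        have h1 := congrArg (fun w : EuclideanSpace ℝ (Fin m) => w j) hz
        simp only [PiLp.add_apply] at h1
        exact congrArg Real.exp h1
      rw [hfun]
    · rintro ⟨z, rfl⟩
      have hmem : ((z : EuclideanSpace ℝ (Fin m)) + (F z : EuclideanSpace ℝ (Fin m))) ∈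
          {w : EuclideanSpace ℝ (Fin m) | ∃ x ∈ P,
            w = L.symm (Yᵀ.mulVec (fun i => Real.log (x i)))} := by
        rw [hF]; exact ⟨z, rfl⟩
      obtain ⟨x, hx, hxe⟩ := hmem
      refine ⟨x, hx, ?_⟩
      have hfun : (fun j => Real.exp (Yᵀ.mulVec (fun i => Real.log (x i)) j))
          = fun j => Real.exp ((z : EuclideanSpace ℝ (Fin m)) j +
              ((F z : EuclideanSpace ℝ (Fin m))) j) := by
        funext j
        have h1 := congrArg (fun w : EuclideanSpace ℝ (Fin m) => w j) hxe
        simp only [PiLp.add_apply] at h1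
        exact congrArg Real.exp h1.symm
      rw [hfun]
  -- orthogonality equivalence on 𝓘
  have hOrth : ∀ w : EuclideanSpace ℝ (Fin m), w ∈ 𝓘 →
      (w ∈ (matRangeE Yᵀ)ᗮ ↔ w ∈ Kᗮ) := by
    intro w hw
    rw [hK]
    exact mem_orth_proj_iff 𝓘 (matRangeE Yᵀ) w hw
  have hSet : ({w : EuclideanSpace ℝ (Fin m) |
        (∃ x ∈ P, w = L.symm ((lapMatrix m R κ).mulVec
            (fun j => Real.exp (Yᵀ.mulVec (fun i => Real.log (x i)) j)))) ∧
        w ∈ (matRangeE Yᵀ)ᗮ} =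
      {w : EuclideanSpace ℝ (Fin m) |
        (∃ z : K, w = L.symm ((lapMatrix m R κ).mulVec
            (fun j => Real.exp ((z : EuclideanSpace ℝ (Fin m)) j +
              ((F z : EuclideanSpace ℝ (Fin m))) j)))) ∧
        w ∈ Kᗮ}) := by
    ext w
    simp only [Set.mem_setOf_eq]
    constructor
    · rintro ⟨hex, horth⟩
      have hw𝓘 : w ∈ 𝓘 := by obtain ⟨x, hx, rfl⟩ := hex; exact hIm _
      exact ⟨(hEx w).mp hex, (hOrth w hw𝓘).mp horth⟩
    · rintro ⟨hex, horth⟩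
      have hw𝓘 : w ∈ 𝓘 := by obtain ⟨z, rfl⟩ := hex; exact hIm _
      exact ⟨(hEx w).mpr hex, (hOrth w hw𝓘).mpr horth⟩
  refine ⟨hSet, ?_⟩
  -- the iff
  have hpos : ∀ x ∈ P, ∀ i, 0 < x i := by
    intro x hx; rw [hP] at hx; exact hx.1
  constructor
  · rintro ⟨x, hx, hzero⟩
    have hprod : (fun j => ∏ i, x i ^ Y i j)
        = fun j => Real.exp (Yᵀ.mulVec (fun i => Real.log (x i)) j) := by
      funext j; exact prod_rpow_eq_exp Y x (hpos x hx) j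
    rw [hprod] at hzero
    set w : EuclideanSpace ℝ (Fin m) := L.symm ((lapMatrix m R κ).mulVec
      (fun j => Real.exp (Yᵀ.mulVec (fun i => Real.log (x i)) j))) with hw
    have hworth : w ∈ (matRangeE Yᵀ)ᗮ := by
      rw [mem_orth_ranT_iff, hw, L.apply_symm_apply]
      exact hzero
    have hwmem : w ∈ {w : EuclideanSpace ℝ (Fin m) |
        (∃ x ∈ P, w = L.symm ((lapMatrix m R κ).mulVec
            (fun j => Real.exp (Yᵀ.mulVec (fun i => Real.log (x i)) j)))) ∧
        w ∈ (matRangeE Yᵀ)ᗮ} := ⟨⟨x, hx, rfl⟩, hworth⟩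
    rw [hSet] at hwmem
    obtain ⟨⟨z, hz⟩, horth⟩ := hwmem
    exact ⟨z, hz ▸ horth⟩
  · rintro ⟨z, hz⟩
    set w : EuclideanSpace ℝ (Fin m) := L.symm ((lapMatrix m R κ).mulVec
      (fun j => Real.exp ((z : EuclideanSpace ℝ (Fin m)) j +
        ((F z : EuclideanSpace ℝ (Fin m))) j))) with hw
    have hwmem : w ∈ {w : EuclideanSpace ℝ (Fin m) |
        (∃ z : K, w = L.symm ((lapMatrix m R κ).mulVec
            (fun j => Real.exp ((z : EuclideanSpace ℝ (Fin m)) j +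
              ((F z : EuclideanSpace ℝ (Fin m))) j)))) ∧
        w ∈ Kᗮ} := ⟨⟨z, rfl⟩, hz⟩
    rw [← hSet] at hwmem
    obtain ⟨⟨x, hx, hxe⟩, horth⟩ := hwmem
    refine ⟨x, hx, ?_⟩
    rw [mem_orth_ranT_iff] at horth
    have hprod : (fun j => ∏ i, x i ^ Y i j)
        = fun j => Real.exp (Yᵀ.mulVec (fun i => Real.log (x i)) j) := by
      funext j; exact prod_rpow_eq_exp Y x (hpos x hx) j
    rw [hprod]
    rw [hxe, L.apply_symm_apply] at horth
    exact horth
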